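/- Let P = {p_1, …, p_n} ⊂ ℝ^d, let σ : P → ℝ^d be an assignment of each point to a center, let U > 0 satisfy Σ_{p ∈ P} ‖p - σ(p)‖₂ ≤ U, and set the grid side length r := √d · n² · U. If the shift t is drawn uniformly at random from [0, r)^d, then the probability that there exists a point p ∈ P lying in a different grid cell than σ(p) is at most 1/n². -/

import Mathlib

open MeasureTheory

lemma one_dim (r : ℝ) (hr : 0 < r) (a b : ℝ) :
    volume {t : ℝ | t ∈ Set.Ico 0 r ∧ ⌊(a - t)/r⌋ ≠ ⌊(b - t)/r⌋} ≤ ENNReal.ofReal |a - b| := by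
  set m := min a b
  set M := max a b
  have key : ∀ x y t : ℝ, t ∈ Set.Ico 0 r → ⌊(x - t)/r⌋ < ⌊(y - t)/r⌋ →
      ∃ k : ℤ, t ∈ Set.Ioc (min x y - k*r) (max x y - k*r) := by
    intro x y t ht hlt
    refine ⟨⌊(y - t)/r⌋, ?_, ?_⟩
    · have h1 : (x - t)/r < (⌊(y - t)/r⌋ : ℝ) := by
        have := Int.lt_floor_add_one ((x - t)/r)
        have : (x - t)/r < (⌊(x - t)/r⌋ : ℝ) + 1 := this
        have hle : (⌊(x - t)/r⌋ : ℝ) + 1 ≤ (⌊(y - t)/r⌋ : ℝ) := by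
          exact_mod_cast hlt
        linarith
      have := (div_lt_iff₀ hr).mp h1
      have hmin : min x y ≤ x := min_le_left x y
      linarith
    · have h2 : ((⌊(y - t)/r⌋ : ℝ)) ≤ (y - t)/r := Int.floor_le _
      have := (le_div_iff₀ hr).mp h2
      have hmax : y ≤ max x y := le_max_right x y
      linarith
  have hsub : {t : ℝ | t ∈ Set.Ico 0 r ∧ ⌊(a - t)/r⌋ ≠ ⌊(b - t)/r⌋} ⊆
      ⋃ k : ℤ, Set.Ioc (m - k*r) (M - k*r) ∩ Set.Ico 0 r := by
    rintro t ⟨ht, hne⟩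
    rcases hne.lt_or_gt with h | h
    · obtain ⟨k, hk⟩ := key a b t ht h
      exact Set.mem_iUnion.mpr ⟨k, by simpa [m, M] using ⟨hk, ht⟩⟩
    · obtain ⟨k, hk⟩ := key b a t ht h
      rw [min_comm, max_comm] at hk
      exact Set.mem_iUnion.mpr ⟨k, by simpa [m, M] using ⟨hk, ht⟩⟩
  calc volume {t : ℝ | t ∈ Set.Ico 0 r ∧ ⌊(a - t)/r⌋ ≠ ⌊(b - t)/r⌋}
      ≤ volume (⋃ k : ℤ, Set.Ioc (m - k*r) (M - k*r) ∩ Set.Ico 0 r) := measure_mono hsub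
    _ ≤ ∑' k : ℤ, volume (Set.Ioc (m - k*r) (M - k*r) ∩ Set.Ico 0 r) := measure_iUnion_le _
    _ = ∑' k : ℤ, volume (Set.Ioc m M ∩ Set.Ico (k*r) (k*r + r)) := by
        refine tsum_congr fun k => ?_
        have : Set.Ioc (m - k*r) (M - k*r) ∩ Set.Ico 0 r =
            (fun t => t + k*r) ⁻¹' (Set.Ioc m M ∩ Set.Ico (k*r) (k*r + r)) := by
          ext t
          simp only [Set.mem_inter_iff, Set.mem_Ioc, Set.mem_Ico, Set.mem_preimage]
          constructor <;> rintro ⟨⟨h1, h2⟩, h3, h4⟩ <;> constructor <;> constructor <;> linarith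
        rw [this, measure_preimage_add_right]
    _ = volume (⋃ k : ℤ, Set.Ioc m M ∩ Set.Ico (k*r) (k*r + r)) := by
        refine (measure_iUnion ?_ ?_).symm
        · intro k k' hne
          have : ∀ k k' : ℤ, k < k' → Disjoint (Set.Ico ((k:ℝ)*r) (k*r + r)) (Set.Ico ((k':ℝ)*r) (k'*r + r)) := by
            intro k k' hlt
            apply Set.disjoint_left.mpr
            rintro x ⟨h1, h2⟩ ⟨h3, h4⟩
            have : ((k:ℝ) + 1) ≤ (k' : ℝ) := by exact_mod_cast hlt
            nlinarith
          rcases hne.lt_or_gt with h | h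
          · exact (Set.disjoint_of_subset Set.inter_subset_right Set.inter_subset_right (this k k' h))
          · exact (Set.disjoint_of_subset Set.inter_subset_right Set.inter_subset_right (this k' k h)).symm
        · exact fun k => (measurableSet_Ioc).inter measurableSet_Ico
    _ ≤ volume (Set.Ioc m M) := measure_mono (Set.iUnion_subset fun k => Set.inter_subset_left)
    _ = ENNReal.ofReal |a - b| := by rw [Real.volume_Ioc, max_sub_min_eq_abs, abs_sub_comm]


lemma Tmeas (r a b : ℝ) : MeasurableSet {t : ℝ | t ∈ Set.Ico 0 r ∧ ⌊(a - t)/r⌋ ≠ ⌊(b - t)/r⌋} := by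
  apply measurableSet_Ico.inter
  apply MeasurableSet.compl (measurableSet_eq_fun ?_ ?_)
  · exact ((measurable_const.sub measurable_id).div_const r).floor
  · exact ((measurable_const.sub measurable_id).div_const r).floor

lemma slice_bound (d : ℕ) (r : ℝ) (hr : 0 < r) (i : Fin d) (a b : ℝ)
    (hone : volume {t : ℝ | t ∈ Set.Ico 0 r ∧ ⌊(a - t)/r⌋ ≠ ⌊(b - t)/r⌋} ≤ ENNReal.ofReal |a - b|) :
    volume ({t : EuclideanSpace ℝ (Fin d) | ⌊(a - t i)/r⌋ ≠ ⌊(b - t i)/r⌋} ∩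
      {t : EuclideanSpace ℝ (Fin d) | ∀ i', t i' ∈ Set.Ico (0:ℝ) r})
      ≤ ENNReal.ofReal |a - b| * (ENNReal.ofReal r) ^ (d - 1) := by
  classical
  set T : Set ℝ := {t : ℝ | t ∈ Set.Ico 0 r ∧ ⌊(a - t)/r⌋ ≠ ⌊(b - t)/r⌋} with hT
  set s : Fin d → Set ℝ := fun i' => if i' = i then T else Set.Ico 0 r with hs
  have hmeas : ∀ i', MeasurableSet (s i') := by
    intro i'
    by_cases h : i' = i <;> simp only [hs, h, if_true, if_false, hT]
    · exact Tmeas r a b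
    · exact measurableSet_Ico
  have hset : ({t : EuclideanSpace ℝ (Fin d) | ⌊(a - t i)/r⌋ ≠ ⌊(b - t i)/r⌋} ∩
      {t : EuclideanSpace ℝ (Fin d) | ∀ i', t i' ∈ Set.Ico (0:ℝ) r}) =
      (MeasurableEquiv.toLp 2 (Fin d → ℝ)).symm ⁻¹' (Set.univ.pi s) := by
    have heq : ∀ (t : EuclideanSpace ℝ (Fin d)) i', (MeasurableEquiv.toLp 2 (Fin d → ℝ)).symm t i' = t i' := fun _ _ => rfl
    ext t
    simp only [heq]
    simp only [Set.mem_inter_iff, Set.mem_setOf_eq, Set.mem_preimage, Set.mem_pi, Set.mem_univ,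
      true_imp_iff]
    constructor
    · rintro ⟨h1, h2⟩ i'
      by_cases h : i' = i
      · subst h
        simp only [hs, T, heq, if_pos rfl, Set.mem_setOf_eq]
        exact ⟨h2 i', h1⟩
      · simp [hs, h, h2 i', heq]
    · intro h
      have hi := h i
      simp only [hs, if_pos rfl] at hi
      refine ⟨hi.2, fun i' => ?_⟩
      by_cases h' : i' = i
      · subst h'; exact hi.1
      · have := h i'
        simpa [hs, h'] using this
  rw [hset, (EuclideanSpace.volume_preserving_symm_measurableEquiv_toLp (Fin d)).measure_preimage
      ((MeasurableSet.univ_pi hmeas).nullMeasurableSet), volume_pi_pi]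
  rw [← Finset.prod_erase_mul _ _ (Finset.mem_univ i)]
  have h1 : volume (s i) ≤ ENNReal.ofReal |a - b| := by simpa [hs] using hone
  have h2 : ∏ i' ∈ Finset.univ.erase i, volume (s i') = (ENNReal.ofReal r) ^ (d - 1) := by
    rw [Finset.prod_congr rfl (fun i' hi' => ?_), Finset.prod_const]
    · congr 1
      simp [Finset.card_erase_of_mem]
    · have : i' ≠ i := Finset.ne_of_mem_erase hi'
      simp [hs, this, Real.volume_Ico]
  rw [h2, mul_comm]
  exact mul_le_mul_left h1 _


theorem no_cluster_split_prob (d n : ℕ) (hn : 1 ≤ n) (U : ℝ) (hU : 0 < U)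
    (p σ : Fin n → EuclideanSpace ℝ (Fin d))
    (hcost : ∑ j, ‖p j - σ j‖ ≤ U) :
    ((ENNReal.ofReal ((Real.sqrt d * n ^ 2 * U) ^ d))⁻¹ •
        volume.restrict
          {t : EuclideanSpace ℝ (Fin d) | ∀ i, t i ∈ Set.Ico (0 : ℝ) (Real.sqrt d * n ^ 2 * U)})
      {t : EuclideanSpace ℝ (Fin d) |
        ∃ j : Fin n, ∃ i : Fin d,
          ⌊(p j i - t i) / (Real.sqrt d * n ^ 2 * U)⌋ ≠
            ⌊(σ j i - t i) / (Real.sqrt d * n ^ 2 * U)⌋}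
      ≤ ENNReal.ofReal (1 / n ^ 2) := by
  set r : ℝ := Real.sqrt d * n ^ 2 * U with hrdef
  rcases Nat.eq_zero_or_pos d with hd | hd
  · subst hd
    have : {t : EuclideanSpace ℝ (Fin 0) |
        ∃ j : Fin n, ∃ i : Fin 0,
          ⌊(p j i - t i) / r⌋ ≠ ⌊(σ j i - t i) / r⌋} = ∅ := by
      ext t; simp
    rw [this]
    simp
  have hd0 : (0:ℝ) < Real.sqrt d := Real.sqrt_pos.mpr (by exact_mod_cast hd)
  have hn0 : (0:ℝ) < (n:ℝ) ^ 2 := by positivity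
  have hr : 0 < r := by positivity
  have hnn : (0:ℝ) < (n:ℝ) := by exact_mod_cast hn
  -- measurability of the box
  have hBox : MeasurableSet {t : EuclideanSpace ℝ (Fin d) | ∀ i, t i ∈ Set.Ico (0:ℝ) r} := by
    have : {t : EuclideanSpace ℝ (Fin d) | ∀ i, t i ∈ Set.Ico (0:ℝ) r} =
        ⋂ i, (fun t : EuclideanSpace ℝ (Fin d) => t i) ⁻¹' Set.Ico (0:ℝ) r := by
      ext t; simp
    rw [this]
    exact MeasurableSet.iInter fun i =>
      ((measurable_pi_apply i).comp (MeasurableEquiv.toLp 2 (Fin d → ℝ)).symm.measurable)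
        measurableSet_Ico
  set R : ENNReal := ENNReal.ofReal r with hR
  set Box := {t : EuclideanSpace ℝ (Fin d) | ∀ i, t i ∈ Set.Ico (0:ℝ) r} with hBoxdef
  set Bad := {t : EuclideanSpace ℝ (Fin d) |
      ∃ j : Fin n, ∃ i : Fin d, ⌊(p j i - t i) / r⌋ ≠ ⌊(σ j i - t i) / r⌋} with hBaddef
  rw [Measure.smul_apply, smul_eq_mul, Measure.restrict_apply' hBox]
  have hQ : Real.sqrt d * U = r * (1 / (n:ℝ) ^ 2) := by
    rw [hrdef]; field_simp
  -- volume bound on the bad set inside the box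
  have hvol : volume (Bad ∩ Box) ≤
      (∑ j : Fin n, ∑ i : Fin d, ENNReal.ofReal |p j i - σ j i|) * R ^ (d - 1) := by
    have hcover : Bad ∩ Box ⊆ ⋃ j : Fin n, ⋃ i : Fin d,
        ({t : EuclideanSpace ℝ (Fin d) | ⌊(p j i - t i)/r⌋ ≠ ⌊(σ j i - t i)/r⌋} ∩ Box) := by
      rintro t ⟨⟨j, i, hji⟩, htB⟩
      exact Set.mem_iUnion.mpr ⟨j, Set.mem_iUnion.mpr ⟨i, hji, htB⟩⟩
    calc volume (Bad ∩ Box) ≤ volume (⋃ j : Fin n, ⋃ i : Fin d,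
          ({t : EuclideanSpace ℝ (Fin d) | ⌊(p j i - t i)/r⌋ ≠ ⌊(σ j i - t i)/r⌋} ∩ Box)) :=
        measure_mono hcover
      _ ≤ ∑' j : Fin n, volume (⋃ i : Fin d,
          ({t : EuclideanSpace ℝ (Fin d) | ⌊(p j i - t i)/r⌋ ≠ ⌊(σ j i - t i)/r⌋} ∩ Box)) :=
        measure_iUnion_le _
      _ ≤ ∑' j : Fin n, ∑' i : Fin d, volume
          ({t : EuclideanSpace ℝ (Fin d) | ⌊(p j i - t i)/r⌋ ≠ ⌊(σ j i - t i)/r⌋} ∩ Box) :=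
        ENNReal.tsum_le_tsum fun j => measure_iUnion_le _
      _ = ∑ j : Fin n, ∑ i : Fin d, volume
          ({t : EuclideanSpace ℝ (Fin d) | ⌊(p j i - t i)/r⌋ ≠ ⌊(σ j i - t i)/r⌋} ∩ Box) := by
        rw [tsum_fintype]; exact Finset.sum_congr rfl fun j _ => tsum_fintype _
      _ ≤ ∑ j : Fin n, ∑ i : Fin d, ENNReal.ofReal |p j i - σ j i| * R ^ (d - 1) := by
        refine Finset.sum_le_sum fun j _ => Finset.sum_le_sum fun i _ => ?_
        exact slice_bound d r hr i (p j i) (σ j i) (one_dim r hr (p j i) (σ j i))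
      _ = (∑ j : Fin n, ∑ i : Fin d, ENNReal.ofReal |p j i - σ j i|) * R ^ (d - 1) := by
        simp [Finset.sum_mul]
  -- real-valued sum bound
  have hsum : ∑ j : Fin n, ∑ i : Fin d, |p j i - σ j i| ≤ Real.sqrt d * U := by
    have hperj : ∀ j : Fin n, ∑ i : Fin d, |p j i - σ j i| ≤ Real.sqrt d * ‖p j - σ j‖ := by
      intro j
      set y : EuclideanSpace ℝ (Fin d) := p j - σ j with hy
      have happ : ∀ i, p j i - σ j i = y i := fun i => rfl
      simp only [happ]
      have h1 : (∑ i, |y i|) ^ 2 ≤ (d : ℝ) * ∑ i, |y i| ^ 2 := by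
        simpa using sq_sum_le_card_mul_sum_sq (s := Finset.univ) (f := fun i => |y i|)
      have h2 : ∑ i, |y i| = Real.sqrt ((∑ i, |y i|) ^ 2) := by
        rw [Real.sqrt_sq (Finset.sum_nonneg fun i _ => abs_nonneg _)]
      rw [h2, EuclideanSpace.norm_eq, ← Real.sqrt_mul (by positivity)]
      apply Real.sqrt_le_sqrt
      simpa [sq_abs] using h1
    calc ∑ j : Fin n, ∑ i : Fin d, |p j i - σ j i| ≤ ∑ j : Fin n, Real.sqrt d * ‖p j - σ j‖ :=
          Finset.sum_le_sum fun j _ => hperj j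
      _ = Real.sqrt d * ∑ j, ‖p j - σ j‖ := by rw [Finset.mul_sum]
      _ ≤ Real.sqrt d * U := by
          exact mul_le_mul_of_nonneg_left hcost hd0.le
  have hofsum : (∑ j : Fin n, ∑ i : Fin d, ENNReal.ofReal |p j i - σ j i|) ≤
      R * ENNReal.ofReal (1 / (n:ℝ) ^ 2) := by
    have : (∑ j : Fin n, ∑ i : Fin d, ENNReal.ofReal |p j i - σ j i|) =
        ENNReal.ofReal (∑ j : Fin n, ∑ i : Fin d, |p j i - σ j i|) := by
      rw [ENNReal.ofReal_sum_of_nonneg fun j _ => Finset.sum_nonneg fun i _ => abs_nonneg _]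
      exact Finset.sum_congr rfl fun j _ =>
        (ENNReal.ofReal_sum_of_nonneg fun i _ => abs_nonneg _).symm
    rw [this, ← ENNReal.ofReal_mul hr.le]
    exact ENNReal.ofReal_le_ofReal (by rw [← hQ]; exact hsum)
  have hRd0 : R ^ d ≠ 0 := pow_ne_zero d (by rw [hR]; exact (ENNReal.ofReal_pos.mpr hr).ne')
  have hRdT : R ^ d ≠ ⊤ := by simp [hR, ENNReal.pow_ne_top, ENNReal.ofReal_ne_top]
  have hC : ENNReal.ofReal (r ^ d) = R ^ d := ENNReal.ofReal_pow hr.le d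
  have hpow : R * R ^ (d - 1) = R ^ d := by
    rw [← pow_succ']; congr 1; omega
  calc (ENNReal.ofReal (r ^ d))⁻¹ * volume (Bad ∩ Box)
      ≤ (R ^ d)⁻¹ * ((R * ENNReal.ofReal (1 / (n:ℝ) ^ 2)) * R ^ (d - 1)) := by
        rw [hC]
        exact mul_le_mul_right (le_trans hvol (mul_le_mul_left hofsum _)) _
    _ = ENNReal.ofReal (1 / (n:ℝ) ^ 2) := by
        rw [show (R * ENNReal.ofReal (1 / (n:ℝ) ^ 2)) * R ^ (d - 1) =
            R ^ d * ENNReal.ofReal (1 / (n:ℝ) ^ 2) by rw [← hpow]; ring]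
        rw [← mul_assoc, ENNReal.inv_mul_cancel hRd0 hRdT, one_mul]
    _ = ENNReal.ofReal (1 / (n:ℕ) ^ 2) := by norm_num
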